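/- Let H be a real Hilbert space, r > 0, and x̄ ∈ H with ‖x̄‖ = r. Then for every y ∈ H, D̂*P_{rB}(x̄)(y) = { z ∈ H : ⟨y, x̄⟩ ≤ ⟨z, x̄⟩ ≤ 0 and y − z = (⟨y − z, x̄⟩/‖x̄‖²) x̄ }. -/

import Mathlib

open RealInnerProductSpace Filter Metric

/-- `P` is the metric projection (nearest-point map) onto `C`. -/
def IsMetricProj {H : Type*} [NormedAddCommGroup H] [InnerProductSpace ℝ H]
    (C : Set H) (P : H → H) : Prop :=
  ∀ x : H, P x ∈ C ∧ ∀ w ∈ C, ‖x - P x‖ ≤ ‖x - w‖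

/-- The set `D̂*f(xb)(y)` characterized by the limsup inequality. -/
def coderivSet {H : Type*} [NormedAddCommGroup H] [InnerProductSpace ℝ H]
    (f : H → H) (xb y : H) : Set H :=
  {z | ∀ ε > (0:ℝ), ∃ δ > (0:ℝ), ∀ u : H, u ≠ xb → ‖u - xb‖ < δ →
    (⟪z, u - xb⟫ - ⟪y, f u - f xb⟫) / ‖u - xb‖ < ε}

/-- The (Fréchet) regular normal cone via the limsup inequality. -/
def regNormalCone {E : Type*} [NormedAddCommGroup E] [InnerProductSpace ℝ E]
    (Ω : Set E) (w : E) : Set E :=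
  {v | ∀ ε > (0:ℝ), ∃ δ > (0:ℝ), ∀ u ∈ Ω, u ≠ w → ‖u - w‖ < δ →
    ⟪v, u - w⟫ / ‖u - w‖ < ε}

/-- The Bouligand (contingent) tangent cone. -/
def bouligandTangentCone {E : Type*} [NormedAddCommGroup E] [NormedSpace ℝ E]
    (Ω : Set E) (w : E) : Set E :=
  {z | ∃ t : ℕ → ℝ, ∃ s : ℕ → E, (∀ n, 0 < t n) ∧
    Tendsto t atTop (nhds 0) ∧ Tendsto s atTop (nhds z) ∧ ∀ n, w + t n • s n ∈ Ω}


section CoderivAux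

variable {H : Type*} [NormedAddCommGroup H] [InnerProductSpace ℝ H]

lemma proj_self {r : ℝ} {P : H → H} (hP : IsMetricProj (closedBall (0:H) r) P)
    {u : H} (hu : ‖u‖ ≤ r) : P u = u := by
  have h := (hP u).2 u (by simpa [mem_closedBall_zero_iff] using hu)
  simp only [sub_self, norm_zero] at h
  have h2 := norm_le_zero_iff.mp h
  rw [sub_eq_zero] at h2
  exact h2.symm


lemma proj_scale {r : ℝ} (hr : 0 < r) {P : H → H}
    (hP : IsMetricProj (closedBall (0:H) r) P)
    {u : H} (hu : r < ‖u‖) : P u = (r/‖u‖) • u := by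
  set q := (r/‖u‖) • u with hqdef
  have hu0 : (0:ℝ) < ‖u‖ := hr.trans hu
  have hq : ‖q‖ = r := by
    rw [hqdef, norm_smul, Real.norm_eq_abs, abs_of_pos (by positivity)]
    field_simp
  have hqmem : q ∈ closedBall (0:H) r := by simp [mem_closedBall_zero_iff, hq]
  have huq : ‖u - q‖ = ‖u‖ - r := by
    have e : u - q = (1 - r/‖u‖) • u := by rw [hqdef, sub_smul, one_smul]
    have h1 : (0:ℝ) ≤ 1 - r/‖u‖ := by
      rw [sub_nonneg, div_le_one hu0]; exact hu.le
    rw [e, norm_smul, Real.norm_eq_abs, abs_of_nonneg h1]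
    field_simp
  have hp1 : ‖P u‖ ≤ r := by
    have := (hP u).1; simpa [mem_closedBall_zero_iff] using this
  have hp2 : ‖u - P u‖ ≤ ‖u‖ - r := huq ▸ (hP u).2 q hqmem
  have hp3 : ‖u‖ - r ≤ ‖u - P u‖ := by
    have := norm_sub_norm_le u (P u); linarith
  have hm : ‖P u + q‖ ≤ 2*r := by
    have := norm_add_le (P u) q; linarith [hq]
  have key : 2*(‖u‖ - r) ≤ ‖(u - P u) + (u - q)‖ := by
    have e : (u - P u) + (u - q) = (2:ℝ)•u - (P u + q) := by
      rw [two_smul]; abel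
    rw [e]
    have h1 := norm_sub_norm_le ((2:ℝ)•u) (P u + q)
    have h2 : ‖(2:ℝ)•u‖ = 2*‖u‖ := by
      rw [norm_smul]; simp
    linarith
  have par : ‖(u - P u) - (u - q)‖^2 ≤ 0 := by
    have e1 := norm_add_sq_real (u - P u) (u - q)
    have e2 := norm_sub_sq_real (u - P u) (u - q)
    nlinarith [key, hp2, hp3, huq, norm_nonneg ((u - P u) + (u - q)), sub_nonneg.mpr hu.le]
  have : (u - P u) - (u - q) = 0 := by
    have := le_antisymm par (sq_nonneg _)
    exact norm_eq_zero.mp (by nlinarith [norm_nonneg ((u - P u) - (u - q))])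
  have : q = P u := by
    have e : (u - P u) - (u - q) = q - P u := by abel
    rw [e, sub_eq_zero] at this; exact this
  exact this.symm

private lemma alg_ineq (r ρ n A B Z c : ℝ) (hr : 0 < r) (hρ : r < ρ) (htri : ρ ≤ r + n)
    (hA : A ≤ Z*n) (hZ : 0 ≤ Z) (hB : B ≤ 0) (hc : c ≤ 0) (hn : 0 ≤ n) :
    A - ((r/ρ)*(B + A + c*(r^2 + (ρ^2 - r^2 - n^2)/2)) - (B + c*r^2)) ≤ (Z/r + 1)*n^2 := by
  have hρ0 : 0 < ρ := hr.trans hρ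
  have h1 : A - ((r/ρ)*(B + A + c*(r^2 + (ρ^2 - r^2 - n^2)/2)) - (B + c*r^2))
      = ((ρ-r)*A + (ρ-r)*B + c*r*((n^2-(ρ-r)^2)/2))/ρ := by
    field_simp
    ring
  rw [h1]
  have h2 : (ρ-r)*A + (ρ-r)*B + c*r*((n^2-(ρ-r)^2)/2) ≤ Z*n^2 := by
    have f1 : 0 ≤ ρ - r := by linarith
    have f2 : ρ - r ≤ n := by linarith
    have f3 : (ρ-r)*A ≤ (ρ-r)*(Z*n) := mul_le_mul_of_nonneg_left hA f1
    have f4 : (ρ-r)*(Z*n) ≤ n*(Z*n) := by nlinarith [mul_nonneg hZ hn]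
    have f5 : (ρ-r)*B ≤ 0 := mul_nonpos_of_nonneg_of_nonpos f1 hB
    have f6 : 0 ≤ (n^2-(ρ-r)^2)/2 := by nlinarith
    have f7 : c*r*((n^2-(ρ-r)^2)/2) ≤ 0 :=
      mul_nonpos_of_nonpos_of_nonneg (mul_nonpos_of_nonpos_of_nonneg hc hr.le) f6
    nlinarith
  calc ((ρ-r)*A + (ρ-r)*B + c*r*((n^2-(ρ-r)^2)/2))/ρ
      ≤ (Z*n^2)/ρ := by exact div_le_div_of_nonneg_right h2 hρ0.le |>.trans_eq rfl
    _ ≤ (Z*n^2)/r := by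
        apply div_le_div_of_nonneg_left (by positivity) hr hρ.le
    _ ≤ (Z/r + 1)*n^2 := by
        have : (Z*n^2)/r = (Z/r)*n^2 := by ring
        nlinarith [sq_nonneg n]

private theorem coderiv_fwd (r : ℝ) (hr : 0 < r) (xb : H) (hx : ‖xb‖ = r) (P : H → H)
    (hP : IsMetricProj (closedBall (0:H) r) P) (y z : H)
    (hz : z ∈ coderivSet P xb y) :
    ⟪y, xb⟫ ≤ ⟪z, xb⟫ ∧ ⟪z, xb⟫ ≤ 0 ∧
      y - z = (⟪y - z, xb⟫ / ‖xb‖ ^ 2) • xb := by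
  have hxb0 : xb ≠ 0 := by
    intro h; rw [h, norm_zero] at hx; linarith
  have hPxb : P xb = xb := proj_self hP hx.le
  -- Part 1
  have part1 : ⟪y, xb⟫ ≤ ⟪z, xb⟫ := by
    have main : ∀ ε > (0:ℝ), (⟪y, xb⟫ - ⟪z, xb⟫)/r < ε := by
      intro ε hε
      obtain ⟨δ, hδ, hδ2⟩ := hz ε hε
      set t := min (δ/(2*r)) (1/2) with htdef
      have ht0 : 0 < t := lt_min (by positivity) (by norm_num)
      have ht2 : t ≤ 1/2 := min_le_right _ _
      set u := xb - t • xb with hudef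
      have hud : u - xb = (-t) • xb := by rw [hudef, neg_smul]; abel
      have hune : u ≠ xb := by
        rw [← sub_ne_zero, hud]
        exact smul_ne_zero (by linarith) hxb0
      have hd : ‖u - xb‖ = t * r := by
        rw [hud, norm_smul, Real.norm_eq_abs, abs_neg, abs_of_pos ht0, hx]
      have hdlt : ‖u - xb‖ < δ := by
        rw [hd]
        calc t * r ≤ (δ/(2*r)) * r := by
              apply mul_le_mul_of_nonneg_right (min_le_left _ _) hr.le
          _ = δ/2 := by field_simp
          _ < δ := by linarith
      have hPu : P u = u := by
        apply proj_self hP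
        have : u = (1 - t) • xb := by rw [hudef, sub_smul, one_smul]
        rw [this, norm_smul, Real.norm_eq_abs, abs_of_nonneg (by linarith), hx]
        nlinarith
      have hq := hδ2 u hune hdlt
      rw [hPu, hPxb, hd, hud] at hq
      have e : (⟪z, (-t) • xb⟫ - ⟪y, (-t) • xb⟫) / (t * r)
          = (⟪y, xb⟫ - ⟪z, xb⟫)/r := by
        rw [real_inner_smul_right, real_inner_smul_right]
        rw [show (-t)*⟪z,xb⟫ - (-t)*⟪y,xb⟫ = t * (⟪y,xb⟫ - ⟪z,xb⟫) by ring]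
        rw [mul_div_mul_left _ _ (ne_of_gt ht0)]
      rw [e] at hq
      exact hq
    by_contra hcon
    push_neg at hcon
    have hp : 0 < (⟪y, xb⟫ - ⟪z, xb⟫)/r := div_pos (by linarith) hr
    exact lt_irrefl _ (main _ hp)
  -- Part 2
  have part2 : ⟪z, xb⟫ ≤ 0 := by
    have main : ∀ ε > (0:ℝ), ⟪z, xb⟫/r < ε := by
      intro ε hε
      obtain ⟨δ, hδ, hδ2⟩ := hz ε hε
      set t := min (δ/(2*r)) 1 with htdef
      have ht0 : 0 < t := lt_min (by positivity) (by norm_num)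
      set u := xb + t • xb with hudef
      have hud : u - xb = t • xb := by rw [hudef]; abel
      have hune : u ≠ xb := by
        rw [← sub_ne_zero, hud]
        exact smul_ne_zero (ne_of_gt ht0) hxb0
      have hd : ‖u - xb‖ = t * r := by
        rw [hud, norm_smul, Real.norm_eq_abs, abs_of_pos ht0, hx]
      have hdlt : ‖u - xb‖ < δ := by
        rw [hd]
        calc t * r ≤ (δ/(2*r)) * r := by
              apply mul_le_mul_of_nonneg_right (min_le_left _ _) hr.le
          _ = δ/2 := by field_simp
          _ < δ := by linarith
      have hun : ‖u‖ = (1+t)*r := by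
        have : u = (1 + t) • xb := by rw [hudef, add_smul, one_smul]
        rw [this, norm_smul, Real.norm_eq_abs, abs_of_pos (by linarith), hx]
      have hPu : P u = xb := by
        rw [proj_scale hr hP (by rw [hun]; nlinarith), hun, hudef,
          show xb + t • xb = (1+t) • xb by rw [add_smul, one_smul], smul_smul]
        rw [show r/((1+t)*r)*(1+t) = 1 by field_simp, one_smul]
      have hq := hδ2 u hune hdlt
      rw [hPu, hPxb, sub_self, inner_zero_right, hd, hud] at hq
      have e : (⟪z, t • xb⟫ - 0) / (t * r) = ⟪z, xb⟫/r := by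
        rw [real_inner_smul_right, sub_zero, mul_div_mul_left _ _ (ne_of_gt ht0)]
      rw [e] at hq
      exact hq
    by_contra hcon
    push_neg at hcon
    exact lt_irrefl _ (main _ (div_pos hcon hr))
  refine ⟨part1, part2, ?_⟩
  -- Part 3
  have perp : ∀ h : H, ‖h‖ = 1 → ⟪xb, h⟫ = 0 → ⟪z, h⟫ - ⟪y, h⟫ ≤ 0 := by
    intro h hh1 hperp
    set M := ‖y‖*(1+r)/(2*r^2) with hMdef
    have hM : 0 ≤ M := by positivity
    clear_value M
    have main : ∀ ε > (0:ℝ), ⟪z, h⟫ - ⟪y, h⟫ < ε*(1+M) := by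
      intro ε hε
      obtain ⟨δ, hδ, hδ2⟩ := hz ε hε
      set t := min (δ/2) (min ε 1) with htdef
      have ht0 : 0 < t := lt_min (by positivity) (lt_min hε (by norm_num))
      have ht1 : t ≤ 1 := le_trans (min_le_right _ _) (min_le_right _ _)
      have htε : t ≤ ε := le_trans (min_le_right _ _) (min_le_left _ _)
      have htδ : t < δ := lt_of_le_of_lt (min_le_left _ _) (by linarith)
      set u := xb + t • h with hudef
      have hud : u - xb = t • h := by rw [hudef]; abel
      have hn : ‖u - xb‖ = t := by
        rw [hud, norm_smul, Real.norm_eq_abs, abs_of_pos ht0, hh1, mul_one]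
      have hune : u ≠ xb := by
        rw [← sub_ne_zero, hud]
        exact smul_ne_zero (ne_of_gt ht0) (by rw [← norm_ne_zero_iff, hh1]; norm_num)
      have hs2 : ‖u‖^2 = r^2 + t^2 := by
        rw [hudef, norm_add_sq_real, real_inner_smul_right, hperp, norm_smul,
          Real.norm_eq_abs, abs_of_pos ht0, hh1, hx]
        ring
      set s := ‖u‖ with hsdef
      have hs0 : 0 ≤ s := norm_nonneg u
      have hsr : r < s := by nlinarith
      have hPu : P u = (r/s) • u := proj_scale hr hP hsr
      have hq := hδ2 u hune (by rw [hn]; exact htδ)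
      rw [hPu, hPxb, hn, hud] at hq
      have e1 : ⟪y, (r/s) • u - xb⟫ = (r/s)*(⟪y, xb⟫ + t*⟪y, h⟫) - ⟪y, xb⟫ := by
        rw [inner_sub_right, real_inner_smul_right, hudef, inner_add_right,
          real_inner_smul_right]
      rw [e1, real_inner_smul_right] at hq
      -- hq : (t*⟪z,h⟫ - ((r/s)*(⟪y,xb⟫+t*⟪y,h⟫) - ⟪y,xb⟫))/t < ε
      have hb1 : -‖y‖ ≤ ⟪y, h⟫ := by
        have := abs_real_inner_le_norm y h
        rw [hh1, mul_one] at this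
        linarith [(abs_le.mp this).1]
      have hb2 : -(‖y‖*r) ≤ ⟪y, xb⟫ := by
        have := abs_real_inner_le_norm y xb
        rw [hx] at this
        linarith [(abs_le.mp this).1]
      have hsne : s ≠ 0 := ne_of_gt (hr.trans hsr)
      have htne : t ≠ 0 := ne_of_gt ht0
      have hts : (0:ℝ) < t*s := mul_pos ht0 (hr.trans hsr)
      clear hδ2 hPu hune hud hn e1 hz hP
      clear_value s
      clear hsdef hudef
      clear u
      clear_value t
      have key3 : (⟪z, h⟫ - ⟪y, h⟫ - (t*⟪z, h⟫ - ((r/s)*(⟪y, xb⟫+t*⟪y, h⟫) - ⟪y, xb⟫))/t)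
          * (t*s) = (s-r)*(-(t*⟪y, h⟫) - ⟪y, xb⟫) := by
        field_simp
        ring
      have l3 : (s-r)*(s+r) = t^2 := by linear_combination hs2
      have bound : (s-r)*(-(t*⟪y, h⟫) - ⟪y, xb⟫) ≤ ε*M*(t*s) := by
        clear hq key3
        have f0 : 0 ≤ s - r := by linarith
        have f1 : -(t*⟪y, h⟫) - ⟪y, xb⟫ ≤ t*‖y‖ + r*‖y‖ := by
          have g0 := mul_le_mul_of_nonneg_left hb1 ht0.le
          linarith
        have f2 : (s-r)*(-(t*⟪y, h⟫) - ⟪y, xb⟫) ≤ (s-r)*(t*‖y‖ + r*‖y‖) :=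
          mul_le_mul_of_nonneg_left f1 f0
        have f3 : s - r ≤ t^2/(2*r) := by
          have e : t^2 - (s-r)*(2*r) = (s-r)^2 := by linear_combination -1 * hs2
          rw [le_div_iff₀ (by positivity : (0:ℝ) < 2*r)]
          nlinarith [sq_nonneg (s-r)]
        have f4 : (s-r)*(t*‖y‖ + r*‖y‖) ≤ (t^2/(2*r))*((1+r)*‖y‖) := by
          have g1 : t*‖y‖ + r*‖y‖ ≤ (1+r)*‖y‖ := by
            have := mul_le_mul_of_nonneg_right ht1 (norm_nonneg y)
            linarith
          have g2 : (0:ℝ) ≤ t*‖y‖ + r*‖y‖ := by positivity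
          exact mul_le_mul f3 g1 g2 (by positivity)
        have htr : t*r ≤ ε*s := mul_le_mul htε hsr.le hr.le hε.le
        have hnum : t^2*((1+r)*‖y‖)*r ≤ ε*(‖y‖*(1+r))*(t*s) := by
          have g := mul_le_mul_of_nonneg_left htr
            (show (0:ℝ) ≤ t*((1+r)*‖y‖) by positivity)
          calc t^2*((1+r)*‖y‖)*r = t*((1+r)*‖y‖)*(t*r) := by ring
            _ ≤ t*((1+r)*‖y‖)*(ε*s) := g
            _ = ε*(‖y‖*(1+r))*(t*s) := by ring
        have f5 : (t^2/(2*r))*((1+r)*‖y‖) ≤ ε*M*(t*s) := by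
          calc (t^2/(2*r))*((1+r)*‖y‖) = (t^2*((1+r)*‖y‖)*r)/(2*r^2) := by
                field_simp
            _ ≤ (ε*(‖y‖*(1+r))*(t*s))/(2*r^2) :=
                div_le_div_of_nonneg_right hnum (by positivity)
            _ = ε*M*(t*s) := by rw [hMdef]; ring
        linarith
      have goal2 : ⟪z, h⟫ - ⟪y, h⟫
          ≤ (t*⟪z, h⟫ - ((r/s)*(⟪y, xb⟫+t*⟪y, h⟫) - ⟪y, xb⟫))/t + ε*M := by
        have hb := key3.le.trans bound
        have := le_of_mul_le_mul_right hb hts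
        linarith
      calc ⟪z, h⟫ - ⟪y, h⟫ ≤ _ + ε*M := goal2
        _ < ε + ε*M := by linarith
        _ = ε*(1+M) := by ring
    by_contra hcon
    push_neg at hcon
    have h1M : (0:ℝ) < 1 + M := by linarith
    have := main ((⟪z, h⟫ - ⟪y, h⟫)/(1+M)) (div_pos hcon h1M)
    rw [div_mul_cancel₀ _ (ne_of_gt h1M)] at this
    exact lt_irrefl _ this
  -- conclude part 3
  set w := (y - z) - (⟪y - z, xb⟫ / ‖xb‖ ^ 2) • xb with hwdef
  have hwperp : ⟪xb, w⟫ = 0 := by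
    rw [hwdef, inner_sub_right, real_inner_smul_right, real_inner_self_eq_norm_sq]
    rw [real_inner_comm xb (y-z)]
    have hne : ‖xb‖ ≠ 0 := norm_ne_zero_iff.mpr hxb0
    field_simp
    ring
  by_cases hw : w = 0
  · rw [hwdef] at hw
    rw [← sub_eq_zero]
    exact hw
  · exfalso
    have hw0 : (0:ℝ) < ‖w‖ := norm_pos_iff.mpr hw
    set h := (-‖w‖⁻¹) • w with hhdef
    have hh1 : ‖h‖ = 1 := by
      rw [hhdef, norm_smul, Real.norm_eq_abs, abs_neg, abs_inv, abs_of_pos hw0]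
      field_simp
    have hhperp : ⟪xb, h⟫ = 0 := by
      rw [hhdef, real_inner_smul_right, hwperp, mul_zero]
    have := perp h hh1 hhperp
    rw [hhdef, real_inner_smul_right, real_inner_smul_right] at this
    -- this : -‖w‖⁻¹ * ⟪z,w⟫ - -‖w‖⁻¹ * ⟪y,w⟫ ≤ 0, i.e. ‖w‖⁻¹ (⟪y,w⟫ - ⟪z,w⟫) ≤ 0
    have hyzw : ⟪y, w⟫ - ⟪z, w⟫ = ‖w‖^2 := by
      have e : y - z = w + (⟪y - z, xb⟫ / ‖xb‖ ^ 2) • xb := by rw [hwdef]; abel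
      have : ⟪y - z, w⟫ = ‖w‖^2 := by
        rw [e, inner_add_left, real_inner_smul_left, hwperp,
          real_inner_self_eq_norm_sq]
        ring
      rw [inner_sub_left] at this
      linarith
    have e2 : -‖w‖⁻¹ * ⟪z, w⟫ - -‖w‖⁻¹ * ⟪y, w⟫ = ‖w‖⁻¹ * (⟪y, w⟫ - ⟪z, w⟫) := by ring
    rw [e2, hyzw] at this
    have hpos : 0 < ‖w‖⁻¹ * ‖w‖^2 := by positivity
    linarith

private theorem coderiv_rev (r : ℝ) (hr : 0 < r) (xb : H) (hx : ‖xb‖ = r) (P : H → H)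
    (hP : IsMetricProj (closedBall (0:H) r) P) (y z : H)
    (h1 : ⟪y, xb⟫ ≤ ⟪z, xb⟫) (h2 : ⟪z, xb⟫ ≤ 0)
    (h3 : y - z = (⟪y - z, xb⟫ / ‖xb‖ ^ 2) • xb) :
    z ∈ coderivSet P xb y := by
  set c : ℝ := ⟪y - z, xb⟫ / r^2 with hcdef
  have h3' : y - z = c • xb := by rw [hcdef, ← hx]; exact h3
  have hy : y = z + c • xb := sub_eq_iff_eq_add'.mp h3'
  have hc : c ≤ 0 := by
    apply div_nonpos_of_nonpos_of_nonneg _ (by positivity)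
    rw [inner_sub_left]; linarith
  have hxx : ⟪xb, xb⟫ = r^2 := by rw [real_inner_self_eq_norm_sq, hx]
  have hPxb : P xb = xb := proj_self hP hx.le
  have key : ∀ u : H, ⟪z, u - xb⟫ - ⟪y, P u - P xb⟫ ≤ (‖z‖/r + 1) * ‖u - xb‖^2 := by
    intro u
    rw [hPxb]
    have hnorm : ‖u‖^2 = r^2 + 2*⟪xb, u - xb⟫ + ‖u - xb‖^2 := by
      have e : u = xb + (u - xb) := by abel
      calc ‖u‖^2 = ‖xb + (u - xb)‖^2 := by rw [← e]
        _ = _ := by rw [norm_add_sq_real, hx]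
    by_cases hcase : ‖u‖ ≤ r
    · rw [proj_self hP hcase]
      have hzy : ⟪z, u - xb⟫ - ⟪y, u - xb⟫ = -(c * ⟪xb, u - xb⟫) := by
        rw [hy]; rw [inner_add_left, real_inner_smul_left]; ring
      have hia : ⟪xb, u - xb⟫ ≤ -(‖u - xb‖^2)/2 := by
        nlinarith [pow_le_pow_left₀ (norm_nonneg u) hcase 2]
      have : 0 ≤ (‖z‖/r + 1) * ‖u - xb‖^2 := by positivity
      nlinarith [mul_nonneg (neg_nonneg.mpr hc) (neg_nonneg.mpr (hia.trans (by nlinarith [sq_nonneg (‖u - xb‖)])))]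
    · push_neg at hcase
      rw [proj_scale hr hP hcase]
      set ρ := ‖u‖ with hρdef
      set n := ‖u - xb‖ with hndef
      set A : ℝ := ⟪z, u - xb⟫ with hAdef
      set B : ℝ := ⟪z, xb⟫ with hBdef
      have hzu : ⟪z, u⟫ = B + A := by
        rw [hAdef, hBdef, inner_sub_right]; ring
      have hxu : ⟪xb, u⟫ = r^2 + ⟪xb, u - xb⟫ := by
        rw [inner_sub_right, hxx]; ring
      have hia : ⟪xb, u - xb⟫ = (ρ^2 - r^2 - n^2)/2 := by
        rw [hρdef, hndef] at *; linarith [hnorm]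
      have e1 : ⟪y, (r/ρ) • u - xb⟫
          = (r/ρ)*(B + A + c*(r^2 + (ρ^2-r^2-n^2)/2)) - (B + c*r^2) := by
        rw [hy]
        rw [inner_sub_right, inner_add_left, inner_add_left, real_inner_smul_right,
          real_inner_smul_right, real_inner_smul_left, real_inner_smul_left,
          hzu, hxu, hxx, hia]
        ring
      rw [e1]
      have htri : ρ ≤ r + n := by
        calc ρ = ‖xb + (u - xb)‖ := by rw [hρdef]; congr 1; abel
          _ ≤ ‖xb‖ + ‖u - xb‖ := norm_add_le _ _
          _ = r + n := by rw [hx, hndef]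
      exact alg_ineq r ρ n A B ‖z‖ c hr hcase htri (real_inner_le_norm z (u - xb))
        (norm_nonneg z) h2 hc (norm_nonneg _)
  intro ε hε
  have hC : (0:ℝ) < ‖z‖/r + 1 := by positivity
  refine ⟨ε/(‖z‖/r + 1), by positivity, ?_⟩
  intro u hu hn
  have hn0 : (0:ℝ) < ‖u - xb‖ := norm_pos_iff.mpr (sub_ne_zero.mpr hu)
  rw [div_lt_iff₀ hn0]
  calc ⟪z, u - xb⟫ - ⟪y, P u - P xb⟫ ≤ (‖z‖/r + 1) * ‖u - xb‖^2 := key u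
    _ = ((‖z‖/r + 1) * ‖u - xb‖) * ‖u - xb‖ := by ring
    _ < ε * ‖u - xb‖ := by
        apply mul_lt_mul_of_pos_right _ hn0
        calc (‖z‖/r + 1) * ‖u - xb‖ < (‖z‖/r + 1) * (ε/(‖z‖/r + 1)) :=
              mul_lt_mul_of_pos_left hn hC
          _ = ε := by field_simp

end CoderivAux

variable {H : Type*} [NormedAddCommGroup H] [InnerProductSpace ℝ H] [CompleteSpace H]

theorem stmt6 (r : ℝ) (hr : 0 < r) (xb : H) (hx : ‖xb‖ = r) (P : H → H)
    (hP : IsMetricProj (closedBall (0:H) r) P) (y : H) :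
    coderivSet P xb y =
      {z : H | ⟪y, xb⟫ ≤ ⟪z, xb⟫ ∧ ⟪z, xb⟫ ≤ 0 ∧
        y - z = (⟪y - z, xb⟫ / ‖xb‖ ^ 2) • xb} := by
  ext z
  constructor
  · intro hz
    exact coderiv_fwd r hr xb hx P hP y z hz
  · intro hz
    exact coderiv_rev r hr xb hx P hP y z hz.1 hz.2.1 hz.2.2
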